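/- Let S be a dense subsemigroup of ((0,∞),+). The set J₀(S²) = {p ∈ 0⁺(S²) : every member of p is a J-set near zero in S²} is a closed subset of 0⁺(S²). -/
import Mathlib


open Filter Set

attribute [local instance] Ultrafilter.add Ultrafilter.addSemigroup

/-- `0⁺(Sᵛ)`: ultrafilters on `Sᵛ` (discrete) containing `((0,ε) ∩ S)ᵛ` for every `ε > 0`. -/
def zeroPlusV (S : AddSubsemigroup ℝ) (v : ℕ) : Set (Ultrafilter (Fin v → S)) :=
  {p | ∀ ε : ℝ, 0 < ε → {f : Fin v → S | ∀ i, 0 < (f i : ℝ) ∧ (f i : ℝ) < ε} ∈ p}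

/-- `E ⊆ Sᵛ` is a J-set near zero: for every finite family of sequences in `Sᵛ` converging to
zero and every `δ > 0`, there are `a ∈ (S ∩ (0,δ))ᵛ` and a finite nonempty `H ⊆ ℕ` with
`a + ∑_{t∈H} f(t) ∈ E` for every `f` in the family (finite sums computed in `ℝ` via the
embedding `S ↪ ℝ`). -/
def JSetNearZeroS (S : AddSubsemigroup ℝ) (v : ℕ) (E : Set (Fin v → S)) : Prop :=
  ∀ F : Finset (ℕ → Fin v → S),
    (∀ f ∈ F, ∀ i : Fin v, Tendsto (fun n => ((f n i : ℝ))) atTop (nhds 0)) →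
    ∀ δ : ℝ, 0 < δ →
      ∃ a : Fin v → S, (∀ i, 0 < (a i : ℝ) ∧ (a i : ℝ) < δ) ∧
        ∃ H : Finset ℕ, H.Nonempty ∧
          ∀ f ∈ F, ∃ e ∈ E, ∀ i, (e i : ℝ) = (a i : ℝ) + ∑ t ∈ H, ((f t i : ℝ))

/-- `J₀(Sᵛ)`: the members of `0⁺(Sᵛ)` all of whose members are J-sets near zero. -/
def JZeroV (S : AddSubsemigroup ℝ) (v : ℕ) : Set (Ultrafilter (Fin v → S)) :=
  {p | p ∈ zeroPlusV S v ∧ ∀ A ∈ p, JSetNearZeroS S v A}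

/-- `J₀(S²)` is a closed subset of `0⁺(S²)` (in the subspace topology). -/
theorem JZero_isClosed_in_zeroPlus (S : AddSubsemigroup ℝ)
    (hpos : ∀ x ∈ S, (0:ℝ) < x)
    (hdense : ∀ a b : ℝ, 0 < a → a < b → ∃ s ∈ S, a < s ∧ s < b) :
    IsClosed {q : zeroPlusV S 2 | (q : Ultrafilter (Fin 2 → S)) ∈ JZeroV S 2} := by
  rw [← isOpen_compl_iff, isOpen_iff_forall_mem_open]
  rintro q hq
  simp only [mem_compl_iff, mem_setOf_eq, JZeroV] at hq
  push_neg at hq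
  obtain ⟨A, hAq, hA⟩ := hq q.2
  refine ⟨(fun r : zeroPlusV S 2 => (r : Ultrafilter (Fin 2 → S))) ⁻¹' {p | A ∈ p},
    ?_, (ultrafilter_isOpen_basic A).preimage continuous_subtype_val, hAq⟩
  rintro r hr ⟨_, h2⟩
  exact hA (h2 A hr)
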